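/- The number 107 is the smallest unstable positive integer other than 1: 107 is unstable, and every integer n with 1 < n < 107 is stable. -/

import Mathlib

/-- `CanWrite n k` means the positive integer `n` can be written using exactly `k` ones
combined by addition and multiplication. -/
inductive CanWrite : ℕ → ℕ → Prop
  | one : CanWrite 1 1
  | add {a b j k : ℕ} : CanWrite a j → CanWrite b k → CanWrite (a + b) (j + k)
  | mul {a b j k : ℕ} : CanWrite a j → CanWrite b k → CanWrite (a * b) (j + k)

/-- The integer complexity `‖n‖`: the least number of ones needed to write `n`. -/
noncomputable def cpx (n : ℕ) : ℕ := sInf {k | CanWrite n k}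

/-- The defect `δ(n) = ‖n‖ - 3 log₃ n`. -/
noncomputable def defect (n : ℕ) : ℝ := (cpx n : ℝ) - 3 * Real.logb 3 n

/-- `n` is stable if `‖3^k n‖ = 3k + ‖n‖` for all `k ≥ 0`. -/
def Stable (n : ℕ) : Prop := ∀ k : ℕ, cpx (3 ^ k * n) = 3 * k + cpx n

/-- The stabilization length `K(n)`: the least `k` such that `3^k n` is stable. -/
noncomputable def stabLen (n : ℕ) : ℕ := sInf {k | Stable (3 ^ k * n)}

/-- The stable complexity `‖n‖_st`: equal to `‖3^k n‖ - 3k` for any `k` with `3^k n` stable. -/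
noncomputable def stableCpx (n : ℕ) : ℕ :=
  sInf {m | ∃ k : ℕ, Stable (3 ^ k * n) ∧ cpx (3 ^ k * n) = m + 3 * k}

/-- The stable defect `δ_st(n) = ‖n‖_st - 3 log₃ n`. -/
noncomputable def stableDefect (n : ℕ) : ℝ := (stableCpx n : ℝ) - 3 * Real.logb 3 n

/-- fuel-based ceiling log base 3: least t with x ≤ 3^t (given enough fuel) -/
def icHF : ℕ → ℕ → ℕ
  | 0, _ => 0
  | (f+1), x => if x ≤ 1 then 0 else 1 + icHF f ((x+2)/3)

/-- `icH m` = least t with m^3 ≤ 3^t -/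
def icH (m : ℕ) : ℕ := icHF (m^3) (m^3)

lemma icHF_le_iff : ∀ f x t : ℕ, x ≤ 3 ^ f → (icHF f x ≤ t ↔ x ≤ 3 ^ t)
  | 0, x, t, hx => by
      simp only [icHF]
      constructor
      · intro _
        calc x ≤ 3 ^ 0 := hx
        _ ≤ 3 ^ t := Nat.pow_le_pow_right (by norm_num) (Nat.zero_le t)
      · intro _; exact Nat.zero_le t
  | (f+1), x, t, hx => by
      simp only [icHF]
      by_cases h1 : x ≤ 1
      · simp [h1]
        calc x ≤ 1 := h1
        _ ≤ 3 ^ t := Nat.one_le_pow _ _ (by norm_num)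
      · simp [h1]
        push_neg at h1
        cases t with
        | zero =>
            rw [Nat.pow_zero]
            omega
        | succ t' =>
            have hy : (x+2)/3 ≤ 3 ^ f := by
              have : x ≤ 3 * 3 ^ f := by
                calc x ≤ 3 ^ (f+1) := hx
                _ = 3 * 3 ^ f := by ring
              omega
            have := icHF_le_iff f ((x+2)/3) t' hy
            constructor
            · intro h
              have h2 : icHF f ((x+2)/3) ≤ t' := by omega
              have h3 : (x+2)/3 ≤ 3 ^ t' := this.mp h2
              have : x ≤ 3 * 3 ^ t' := by omega
              calc x ≤ 3 * 3 ^ t' := this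
              _ = 3 ^ (t'+1) := by ring
            · intro h
              have h3 : (x+2)/3 ≤ 3 ^ t' := by
                have : x ≤ 3 * 3 ^ t' := by
                  calc x ≤ 3 ^ (t'+1) := h
                  _ = 3 * 3 ^ t' := by ring
                omega
              have := this.mpr h3
              omega

lemma icH_le_iff {m t : ℕ} : icH m ≤ t ↔ m ^ 3 ≤ 3 ^ t := by
  apply icHF_le_iff
  exact le_of_lt (Nat.lt_pow_self (by norm_num))

lemma icH_cube (m : ℕ) : m ^ 3 ≤ 3 ^ icH m := icH_le_iff.mp le_rfl

lemma icH_gt {m t : ℕ} (h : 3 ^ t < m ^ 3) : t < icH m := by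
  by_contra hc
  push_neg at hc
  have := le_trans (icH_cube m) (Nat.pow_le_pow_right (by norm_num) hc)
  omega

lemma icH_mono {m n : ℕ} (h : m ≤ n) : icH m ≤ icH n :=
  icH_le_iff.mpr (le_trans (Nat.pow_le_pow_left h 3) (icH_cube n))

lemma icH_two_le {m : ℕ} (hm : 2 ≤ m) : 2 ≤ icH m := by
  have h8 : (2:ℕ)^3 ≤ m ^ 3 := Nat.pow_le_pow_left hm 3
  have : (3:ℕ)^1 < m ^ 3 := by norm_num at h8 ⊢; omega
  have := icH_gt this
  omega

lemma icH_three_mul {m : ℕ} (hm : 1 ≤ m) : icH (3 * m) = 3 + icH m := by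
  have h1 : (3*m)^3 = 27 * m^3 := by ring
  apply le_antisymm
  · rw [icH_le_iff, h1, pow_add]
    exact Nat.mul_le_mul (by norm_num) (icH_cube m)
  · have ht : 3 ≤ icH (3*m) := by
      apply icH_gt
      have : (1:ℕ) ≤ m ^ 3 := Nat.one_le_pow _ _ hm
      calc (3:ℕ)^2 < 27 * 1 := by norm_num
      _ ≤ 27 * m ^ 3 := by omega
      _ = (3*m)^3 := h1.symm
    have h2 : (3*m)^3 ≤ 3 ^ icH (3*m) := icH_cube _
    rw [h1] at h2
    have h3 : 3 ^ icH (3*m) = 27 * 3 ^ (icH (3*m) - 3) := by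
      rw [show (27:ℕ) = 3^3 by norm_num, ← pow_add]
      congr 1
      omega
    rw [h3] at h2
    have h4 : m ^ 3 ≤ 3 ^ (icH (3*m) - 3) := Nat.le_of_mul_le_mul_left h2 (by norm_num)
    have := icH_le_iff.mpr h4
    omega

lemma icH_pow3 {m : ℕ} (hm : 1 ≤ m) (τ : ℕ) : icH (3 ^ τ * m) = 3 * τ + icH m := by
  induction τ with
  | zero => simp
  | succ k ih =>
      have h : 3 ^ (k+1) * m = 3 * (3 ^ k * m) := by ring
      rw [h, icH_three_mul (Nat.one_le_iff_ne_zero.mpr (by positivity)), ih]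
      ring

lemma icH_mul_le (u v : ℕ) : icH (u * v) ≤ icH u + icH v := by
  rw [icH_le_iff, mul_pow, pow_add]
  exact Nat.mul_le_mul (icH_cube u) (icH_cube v)
/-- fuel-based 3-free core -/
def icCoreF : ℕ → ℕ → ℕ
  | 0, x => x
  | (f+1), x => if x % 3 = 0 ∧ x ≠ 0 then icCoreF f (x/3) else x

def icCore (m : ℕ) : ℕ := icCoreF m m

/-- fuel-based power-of-3 test -/
def icP3F : ℕ → ℕ → Bool
  | 0, x => x == 1
  | (f+1), x => x == 1 || (x % 3 == 0 && x != 0 && icP3F f (x/3))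

def icP3 (m : ℕ) : Bool := icP3F m m

def icFfin : List ℕ := [1,2,4,5,7,8,10,13,14,16,19,20,28,32,40,64,128,256,512]
def icS2 : List ℕ := [23,47,53,59,67,71,77,79,89,94,101,103,106]

def icG (m : ℕ) : Prop := m ∈ icFfin ∨ (82 ≤ m ∧ icP3 (m-1) = true)

instance icGdec : DecidablePred icG := fun m => by unfold icG; infer_instance

def icD (m : ℕ) : ℕ := if m ∈ icS2 then 2 else if icG m then 0 else 1

def icF (m : ℕ) : ℕ := icH m + icD (icCore m)

-- core lemmas
lemma icCoreF_eq : ∀ f g x : ℕ, x ≤ 3 ^ f → x ≤ 3 ^ g → icCoreF f x = icCoreF g x := by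
  intro f
  induction f with
  | zero =>
      intro g x hf hg
      interval_cases x
      · cases g <;> simp [icCoreF]
      · cases g <;> simp [icCoreF]
  | succ f ih =>
      intro g x hf hg
      cases g with
      | zero =>
          interval_cases x
          · simp [icCoreF]
          · simp [icCoreF]
      | succ g =>
          simp only [icCoreF]
          by_cases h : x % 3 = 0 ∧ x ≠ 0
          · simp only [if_pos h]
            apply ih
            · have : x ≤ 3 * 3 ^ f := by calc x ≤ 3^(f+1) := hf
                _ = 3*3^f := by ring
              omega
            · have : x ≤ 3 * 3 ^ g := by calc x ≤ 3^(g+1) := hg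
                _ = 3*3^g := by ring
              omega
          · simp only [if_neg h]

lemma icCore_three (m : ℕ) : icCore (3 * m) = icCore m := by
  cases m with
  | zero => simp [icCore, icCoreF]
  | succ n =>
      set x := 3*(n+1) with hx
      obtain ⟨w, hw⟩ : ∃ w, x = w+1 := ⟨x-1, by omega⟩
      have h3 : x % 3 = 0 ∧ x ≠ 0 := by omega
      have hn : n+1 ≤ 3 ^ (n+1) := le_of_lt (Nat.lt_pow_self (by norm_num))
      have step : icCoreF x x = icCoreF w (n+1) := by
        rw [hw, icCoreF, ← hw]
        simp only [if_pos h3]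
        congr 1
        omega
      show icCoreF x x = icCore (n+1)
      rw [step]
      apply icCoreF_eq
      · calc n+1 ≤ 3^(n+1) := hn
          _ ≤ 3^w := Nat.pow_le_pow_right (by norm_num) (by omega)
      · exact hn

lemma icCore_not_dvd {m : ℕ} (h : ¬ (3 ∣ m)) : icCore m = m := by
  have h3 : ¬ (m % 3 = 0) := by omega
  cases m with
  | zero => rfl
  | succ n =>
      rw [icCore, icCoreF]
      simp only [if_neg (by omega : ¬ ((n+1) % 3 = 0 ∧ (n+1) ≠ 0))]

lemma icCore_spec : ∀ m : ℕ, 1 ≤ m → ∃ τ : ℕ, m = 3 ^ τ * icCore m ∧ ¬ (3 ∣ icCore m) := by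
  intro m
  induction m using Nat.strong_induction_on with
  | _ m ih =>
      intro hm
      by_cases h : 3 ∣ m
      · obtain ⟨c, hc⟩ := h
        have hc1 : 1 ≤ c := by omega
        obtain ⟨τ, h1, h2⟩ := ih c (by omega) hc1
        refine ⟨τ+1, ?_, ?_⟩
        · rw [hc, icCore_three, pow_succ]
          calc 3 * c = 3 * (3^τ * icCore c) := by rw [← h1]
          _ = 3 ^ τ * 3 * icCore c := by ring
        · rw [hc, icCore_three]; exact h2
      · exact ⟨0, by simp [icCore_not_dvd h], by rw [icCore_not_dvd h]; exact h⟩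

lemma icCore_pos {m : ℕ} (hm : 1 ≤ m) : 1 ≤ icCore m := by
  obtain ⟨τ, h1, _⟩ := icCore_spec m hm
  by_contra h
  push_neg at h
  interval_cases (icCore m)
  omega

-- icP3 lemmas
lemma icP3F_iff : ∀ f x : ℕ, x ≤ 3 ^ f → (icP3F f x = true ↔ ∃ k, x = 3 ^ k) := by
  intro f
  induction f with
  | zero =>
      intro x hf
      interval_cases x
      · simp [icP3F]
        intro k
        positivity
      · simp [icP3F]
        exact ⟨0, rfl⟩
  | succ f ih =>
      intro x hf
      rw [icP3F]
      by_cases h1 : x = 1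
      · simp [h1]; exact ⟨0, rfl⟩
      · by_cases h2 : x % 3 = 0 ∧ x ≠ 0
        · have hdiv : x / 3 ≤ 3 ^ f := by
            have : x ≤ 3*3^f := by calc x ≤ 3^(f+1) := hf
                                    _ = 3*3^f := by ring
            omega
          have := ih (x/3) hdiv
          simp only [Bool.or_eq_true, beq_iff_eq, Bool.and_eq_true, bne_iff_ne]
          constructor
          · rintro (h|⟨⟨_,_⟩,hp⟩)
            · exact ⟨0, by omega⟩
            · obtain ⟨k, hk⟩ := this.mp hp
              exact ⟨k+1, by rw [pow_succ]; omega⟩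
          · rintro ⟨k, hk⟩
            cases k with
            | zero => omega
            | succ k' =>
                right
                refine ⟨⟨by omega, by omega⟩, ?_⟩
                apply this.mpr
                exact ⟨k', by rw [pow_succ] at hk; omega⟩
        · simp only [Bool.or_eq_true, beq_iff_eq, Bool.and_eq_true, bne_iff_ne]
          constructor
          · rintro (h|⟨⟨ha,hb⟩,_⟩)
            · omega
            · omega
          · rintro ⟨k, hk⟩
            cases k with
            | zero => left; omega
            | succ k' =>
                exfalso
                apply h2
                constructor
                · rw [hk, pow_succ]; omega
                · rw [hk]; positivity

lemma icP3_iff {x : ℕ} : icP3 x = true ↔ ∃ k, x = 3 ^ k :=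
  icP3F_iff x x (le_of_lt (Nat.lt_pow_self (by norm_num)))


lemma cube3 {c : ℕ} (h : 3 ≤ c) : (c+1)^3 ≤ 3*c^3 := by nlinarith [sq_nonneg c]
lemma cube3b {c : ℕ} (h : 5 ≤ c) : (c+2)^3 ≤ 3*c^3 := by nlinarith [sq_nonneg c]
lemma cube3c {c : ℕ} (h : 7 ≤ c) : (c+3)^3 ≤ 3*c^3 := by nlinarith [sq_nonneg c]
lemma cube4 {a b : ℕ} (h : a ≤ b) : (a+b)^3 ≤ 4*(a^3+b^3) := by
  obtain ⟨d, rfl⟩ : ∃ d, b = a + d := ⟨b - a, by omega⟩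
  ring_nf
  nlinarith [Nat.zero_le (a*d*d), Nat.zero_le (d*d*d)]

lemma icF_ge_H (m : ℕ) : icH m ≤ icF m := Nat.le_add_right _ _

lemma icF_two_ge {m : ℕ} (hm : 2 ≤ m) : 2 ≤ icF m := le_trans (icH_two_le hm) (icF_ge_H m)

lemma icD_pos {m : ℕ} (h : ¬ icG m) : 1 ≤ icD m := by
  unfold icD
  by_cases h2 : m ∈ icS2
  · simp [h2]
  · simp [h2, h]

lemma icD_two {m : ℕ} (h : icD m = 2) : m ∈ icS2 := by
  unfold icD at h
  by_cases h2 : m ∈ icS2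
  · exact h2
  · by_cases h3 : icG m <;> simp [h2, h3] at h

lemma icD_le_two (m : ℕ) : icD m ≤ 2 := by
  unfold icD
  by_cases h2 : m ∈ icS2
  · simp [h2]
  · by_cases h3 : icG m <;> simp [h2, h3]

lemma icD_G {m : ℕ} (h : icG m) (h2 : m ∉ icS2) : icD m = 0 := by
  unfold icD
  simp [h, h2]

lemma icCore_pow3 (k m : ℕ) : icCore (3 ^ k * m) = icCore m := by
  induction k with
  | zero => simp
  | succ j ih =>
      have h : 3 ^ (j+1) * m = 3 * (3 ^ j * m) := by ring
      rw [h, icCore_three, ih]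

lemma icF_pow3 {m : ℕ} (hm : 1 ≤ m) (k : ℕ) : icF (3 ^ k * m) = 3 * k + icF m := by
  unfold icF
  rw [icH_pow3 hm, icCore_pow3]
  ring

lemma cubeRay (u c : ℕ) (base : (u+1)^3 ≤ 3^c) :
    ∀ σ : ℕ, (u * 3^σ + 1)^3 ≤ 3^(3*σ + c) := by
  intro σ
  induction σ with
  | zero => simpa using base
  | succ j ih =>
      have h1 : u * 3^(j+1) + 1 ≤ 3 * (u * 3^j + 1) := by
        have : u * 3^(j+1) = 3 * (u * 3^j) := by ring
        omega
      calc (u * 3^(j+1) + 1)^3 ≤ (3 * (u * 3^j + 1))^3 := Nat.pow_le_pow_left h1 3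
      _ = 27 * (u * 3^j + 1)^3 := by ring
      _ ≤ 27 * 3^(3*j+c) := by omega
      _ = 3^(3*(j+1)+c) := by
          rw [show 3*(j+1)+c = 3 + (3*j+c) by ring, pow_add, pow_add]
          ring

lemma icNbr_easy {u σ N : ℕ} (h : N = 3^σ * u + 1) (base : (u+1)^3 ≤ 3^(icH u)) :
    N^3 ≤ 3^(3*σ + icH u) := by
  subst h
  rw [show (3:ℕ)^σ * u = u * 3^σ by ring]
  exact cubeRay u (icH u) base σ

lemma icS2_facts : ∀ s ∈ icS2, 3^(icH s - 1) < (s-1)^3 ∧ icH s + 1 ≤ icF (s-1)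
    ∧ icH s ≤ icF (s-2) ∧ icH s ≤ icF (s-3) + 1 ∧ 23 ≤ s ∧ s ≤ 106 ∧ ¬ (3 ∣ s) := by decide

/-- the key neighbour lemma -/
lemma icNbr {N : ℕ} (hN : 11 ≤ N) (hd : 1 ≤ icD (icCore N)) : icH N ≤ icF (N-1) := by
  have hM1 : 1 ≤ N - 1 := by omega
  obtain ⟨σ, hM, hx3⟩ := icCore_spec (N-1) hM1
  obtain ⟨x, hxdef⟩ : ∃ x, icCore (N-1) = x := ⟨_, rfl⟩
  rw [hxdef] at hM hx3
  have hx1 : 1 ≤ x := hxdef ▸ icCore_pos hM1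
  have hHM : icH (N-1) = 3 * σ + icH x := by rw [hM]; exact icH_pow3 hx1 σ
  have hFM : icF (N-1) = icH (N-1) + icD x := by rw [icF, hxdef]
  by_cases hGx : icG x
  · suffices hs : N^3 ≤ 3^(3*σ + icH x) by
      rw [hFM, hHM]
      have := icH_le_iff.mpr hs
      omega
    have hNM : N = 3^σ * x + 1 := by omega
    rcases hGx with hFf | hfam
    · fin_cases hFf
      · -- x = 1 : contradiction with hd
        exfalso
        rw [mul_one] at hNM
        have hs3 : 3 ≤ σ := by
          by_contra hc
          push_neg at hc
          interval_cases σ <;> norm_num at hNM <;> omega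
        have hdv3 : (3:ℕ) ∣ 3^σ := dvd_pow_self 3 (by omega)
        have hmod : ¬ (3 ∣ N) := by omega
        have hcN : icCore N = N := icCore_not_dvd hmod
        have hGN : icG N := by
          rcases Nat.lt_or_ge σ 4 with h4 | h4
          · left
            have hse : σ = 3 := by omega
            rw [hse] at hNM
            norm_num at hNM
            rw [hNM]
            decide
          · right
            constructor
            · have h81 : (81:ℕ) ≤ 3^σ := by
                calc (81:ℕ) = 3^4 := by norm_num
                _ ≤ 3^σ := Nat.pow_le_pow_right (by norm_num) h4
              omega
            · rw [icP3_iff]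
              exact ⟨σ, by omega⟩
        have hz : icD (icCore N) = 0 := by
          rw [hcN]
          apply icD_G hGN
          intro hmem
          obtain ⟨_,_,_,_,h23,h106,hdv⟩ := icS2_facts N hmem
          have hs5 : σ ≤ 4 := by
            by_contra hc
            push_neg at hc
            have h243 : (243:ℕ) ≤ 3^σ := by
              calc (243:ℕ) = 3^5 := by norm_num
              _ ≤ 3^σ := Nat.pow_le_pow_right (by norm_num) hc
            omega
          interval_cases σ <;> norm_num at hNM <;> rw [hNM] at hmem <;> revert hmem <;> decide
        omega
      · -- x = 2
        rcases Nat.lt_or_ge σ 3 with h3 | h3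
        · exfalso
          interval_cases σ <;> norm_num at hNM
          · omega
          · omega
          · -- N = 19
            have hz : icD (icCore N) = 0 := by
              rw [hNM, show icCore 19 = 19 by decide]
              decide
            omega
        · obtain ⟨σc, rfl⟩ : ∃ w, σ = w + 3 := ⟨σ - 3, by omega⟩
          have hc := cubeRay 54 11 (by norm_num) σc
          have heq : N = 54 * 3^σc + 1 := by
            rw [hNM, pow_add]; ring
          have hexp : 3*(σc+3) + icH 2 = 3*σc + 11 := by
            rw [show icH 2 = 2 by decide]; omega
          rw [heq, hexp]
          exact hc
      · -- x = 4
        rcases Nat.lt_or_ge σ 2 with h3 | h3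
        · exfalso
          interval_cases σ <;> norm_num at hNM
          · omega
          · have hz : icD (icCore N) = 0 := by
              rw [hNM, show icCore 13 = 13 by decide]
              decide
            omega
        · obtain ⟨σc, rfl⟩ : ∃ w, σ = w + 2 := ⟨σ - 2, by omega⟩
          have hc := cubeRay 36 10 (by norm_num) σc
          have heq : N = 36 * 3^σc + 1 := by
            rw [hNM, pow_add]; ring
          have hexp : 3*(σc+2) + icH 4 = 3*σc + 10 := by
            rw [show icH 4 = 4 by decide]; omega
          rw [heq, hexp]
          exact hc
      · exact icNbr_easy hNM (by decide)
      · exact icNbr_easy hNM (by decide)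
      · exact icNbr_easy hNM (by decide)
      · exact icNbr_easy hNM (by decide)
      · exact icNbr_easy hNM (by decide)
      · exact icNbr_easy hNM (by decide)
      · exact icNbr_easy hNM (by decide)
      · exact icNbr_easy hNM (by decide)
      · exact icNbr_easy hNM (by decide)
      · exact icNbr_easy hNM (by decide)
      · exact icNbr_easy hNM (by decide)
      · exact icNbr_easy hNM (by decide)
      · exact icNbr_easy hNM (by decide)
      · exact icNbr_easy hNM (by decide)
      · exact icNbr_easy hNM (by decide)
      · exact icNbr_easy hNM (by decide)
    · -- x = 3^k + 1 (fam)
      obtain ⟨k, hk⟩ := icP3_iff.mp hfam.2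
      have hx : x = 3^k + 1 := by omega
      have hk4 : 4 ≤ k := by
        by_contra hc
        push_neg at hc
        have h82 : 82 ≤ x := hfam.1
        interval_cases k <;> omega
      obtain ⟨t, ht⟩ : ∃ t, 3^k = t := ⟨_, rfl⟩
      have ht81 : 81 ≤ t := by
        rw [← ht]
        calc (81:ℕ) = 3^4 := by norm_num
        _ ≤ 3^k := Nat.pow_le_pow_right (by norm_num) hk4
      have hiH : 3*k + 1 ≤ icH x := by
        apply icH_gt
        rw [hx, ht]
        calc 3^(3*k) = (3^k)^3 := by rw [← pow_mul, Nat.mul_comm]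
        _ = t^3 := by rw [ht]
        _ < (t+1)^3 := Nat.pow_lt_pow_left (by omega) (by norm_num)
      have hcube : N^3 ≤ 3^(3*σ + (3*k+1)) := by
        have hNle : N ≤ 3^σ * (t + 2) := by
          rw [hNM, hx, ht]
          have h1 : (1:ℕ) ≤ 3^σ := Nat.one_le_pow _ _ (by norm_num)
          calc 3^σ * (t+1) + 1 ≤ 3^σ * (t+1) + 3^σ := by omega
          _ = 3^σ * (t + 2) := by ring
        calc N^3 ≤ (3^σ * (t+2))^3 := Nat.pow_le_pow_left hNle 3
        _ = (3^σ)^3 * (t+2)^3 := by ring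
        _ ≤ (3^σ)^3 * (3 * t^3) := Nat.mul_le_mul_left _ (cube3b (by omega))
        _ = 3^(σ*3) * (3 * 3^(k*3)) := by
            rw [← ht, ← pow_mul, ← pow_mul]
        _ = 3^(σ*3) * 3^(k*3+1) := by rw [← pow_succ']
        _ = 3^(σ*3 + (k*3+1)) := by rw [← pow_add]
        _ = 3^(3*σ + (3*k+1)) := by
            congr 1
            ring
      calc N^3 ≤ 3^(3*σ + (3*k+1)) := hcube
      _ ≤ 3^(3*σ + icH x) := Nat.pow_le_pow_right (by norm_num) (by omega)
  · have hdx : 1 ≤ icD x := icD_pos hGx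
    have h3 : N^3 ≤ 3 * (N-1)^3 := by
      obtain ⟨c, rfl⟩ : ∃ c, N = c + 1 := ⟨N-1, by omega⟩
      simp only [Nat.add_sub_cancel]
      exact cube3 (by omega)
    have hHN : icH N ≤ icH (N-1) + 1 := by
      apply icH_le_iff.mpr
      calc N^3 ≤ 3*(N-1)^3 := h3
      _ ≤ 3 * 3^(icH (N-1)) := by have := icH_cube (N-1); omega
      _ = 3^(icH (N-1)+1) := by ring
    omega

lemma cube9 {c : ℕ} (h : 7 ≤ c) : 9*(c+4)^3 ≤ 64*c^3 := by nlinarith [sq_nonneg c]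

lemma pow3_ge_two {a A : ℕ} (ha : 2 ≤ a) (h : a^3 ≤ 3^A) : 2 ≤ A := by
  by_contra hc
  push_neg at hc
  have h8 : (8:ℕ) ≤ a^3 := by
    calc (8:ℕ) = 2^3 := by norm_num
    _ ≤ a^3 := Nat.pow_le_pow_left ha 3
  interval_cases A <;> omega

lemma cubeAdd {a b A B : ℕ} (ha : 1 ≤ a) (hab : a ≤ b) (hA1 : 1 ≤ A) (hB1 : 1 ≤ B)
    (h1 : a^3 ≤ 3^A) (h2 : b^3 ≤ 3^B) : (a+b)^3 ≤ 3^(A+B) := by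
  rcases Nat.lt_or_ge a 2 with ha2 | ha2
  · have ha1 : a = 1 := by omega
    subst ha1
    rcases Nat.lt_or_ge b 3 with hb3 | hb3
    · interval_cases b
      · calc (1+1)^3 = 8 := by norm_num
        _ ≤ 3^2 := by norm_num
        _ ≤ 3^(A+B) := Nat.pow_le_pow_right (by norm_num) (by omega)
      · have hB2 : 2 ≤ B := pow3_ge_two (by norm_num) h2
        calc (1+2)^3 = 27 := by norm_num
        _ = 3^3 := by norm_num
        _ ≤ 3^(A+B) := Nat.pow_le_pow_right (by norm_num) (by omega)
    · calc (1+b)^3 = (b+1)^3 := by ring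
      _ ≤ 3*b^3 := cube3 hb3
      _ ≤ 3 * 3^B := by omega
      _ = 3^(1+B) := by rw [pow_add]; ring
      _ ≤ 3^(A+B) := Nat.pow_le_pow_right (by norm_num) (by omega)
  · have hb2 : 2 ≤ b := le_trans ha2 hab
    have hA2 : 2 ≤ A := pow3_ge_two ha2 h1
    have hB2 : 2 ≤ B := pow3_ge_two hb2 h2
    have hc4 : (a+b)^3 ≤ 4*(a^3+b^3) := cube4 hab
    have hpow : (3:ℕ)^(A+B) = 3^A * 3^B := pow_add 3 A B
    rcases le_total A B with hABle | hABle
    · have h3AB : (3:ℕ)^A ≤ 3^B := Nat.pow_le_pow_right (by norm_num) hABle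
      have h9 : (9:ℕ) ≤ 3^A := by
        calc (9:ℕ) = 3^2 := by norm_num
        _ ≤ 3^A := Nat.pow_le_pow_right (by norm_num) hA2
      nlinarith [h3AB, h9, h1, h2]
    · have h3AB : (3:ℕ)^B ≤ 3^A := Nat.pow_le_pow_right (by norm_num) hABle
      have h9 : (9:ℕ) ≤ 3^B := by
        calc (9:ℕ) = 3^2 := by norm_num
        _ ≤ 3^B := Nat.pow_le_pow_right (by norm_num) hB2
      nlinarith [h3AB, h9, h1, h2]

lemma icH_lt_pow {m : ℕ} (hm : 2 ≤ m) : 3^(icH m - 1) < m^3 := by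
  by_contra hc
  push_neg at hc
  have h2 := icH_two_le hm
  have := icH_le_iff.mpr hc
  omega

lemma icS2_ray {s : ℕ} (hs : s ∈ icS2) {τ : ℕ} (hτ : 1 ≤ τ) {w : ℕ} (hw1 : 1 ≤ w) (hw : w ≤ 2) :
    3^(3*τ + icH s - 1) < (3^τ * s - w)^3 := by
  obtain ⟨base, -, -, -, h23, h106, hdv⟩ := icS2_facts s hs
  have h3 : (3:ℕ) ≤ 3^τ := by
    calc (3:ℕ) = 3^1 := by norm_num
    _ ≤ 3^τ := Nat.pow_le_pow_right (by norm_num) hτ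
  have hH2 : 2 ≤ icH s := icH_two_le (by omega)
  have hmul : 3^τ * (s-1) + 3^τ = 3^τ * s := by
    obtain ⟨u, hu⟩ : ∃ u, s = u+1 := ⟨s-1, by omega⟩
    subst hu
    simp only [Nat.add_sub_cancel]
    ring
  have hle : 3^τ * (s-1) ≤ 3^τ*s - w := by omega
  calc 3^(3*τ + icH s - 1) = 3^(3*τ) * 3^(icH s - 1) := by
        rw [← pow_add]
        congr 1
        omega
  _ < 3^(3*τ) * (s-1)^3 := by
        have hp : 0 < (3:ℕ)^(3*τ) := by positivity
        exact mul_lt_mul_of_pos_left base hp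
  _ = (3^τ * (s-1))^3 := by
        rw [mul_pow, ← pow_mul]
        congr 2
        ring
  _ ≤ (3^τ*s - w)^3 := Nat.pow_le_pow_left hle 3

lemma icS2_ray_notG {s : ℕ} (hs : s ∈ icS2) {τ : ℕ} (hτ : 1 ≤ τ) : ¬ icG (3^τ * s - 1) := by
  obtain ⟨-, -, -, -, h23, h106, hdv⟩ := icS2_facts s hs
  have h3 : (3:ℕ) ≤ 3^τ := by
    calc (3:ℕ) = 3^1 := by norm_num
    _ ≤ 3^τ := Nat.pow_le_pow_right (by norm_num) hτ
  have h69 : 69 ≤ 3^τ * s := by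
    calc 69 = 3 * 23 := by norm_num
    _ ≤ 3^τ * s := Nat.mul_le_mul h3 h23
  intro hG
  obtain ⟨M, hM⟩ : ∃ M, 3^τ*s - 1 = M := ⟨_, rfl⟩
  rw [hM] at hG
  have hdvN : (3:ℕ) ∣ 3^τ * s := Dvd.dvd.mul_right (dvd_pow_self 3 (by omega)) s
  have hτ5 : τ ≤ 5 := by
    by_contra hc
    push_neg at hc
    have h729 : (729:ℕ) ≤ 3^τ := by
      calc (729:ℕ) = 3^6 := by norm_num
      _ ≤ 3^τ := Nat.pow_le_pow_right (by norm_num) hc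
    have := Nat.mul_le_mul h729 h23
    have hMle : M ≤ 512 ∨ icP3 (M-1) = true ∧ 82 ≤ M := by
      rcases hG with hFf | hfam
      · left; fin_cases hFf <;> norm_num
      · right; exact ⟨hfam.2, hfam.1⟩
    rcases hMle with hML | ⟨hp3, h82⟩
    · omega
    · obtain ⟨k, hk⟩ := icP3_iff.mp hp3
      rcases Nat.eq_zero_or_pos k with hk0 | hk1
      · rw [hk0] at hk; norm_num at hk; omega
      · have : (3:ℕ) ∣ 3^k := dvd_pow_self 3 (by omega)
        omega
  rcases hG with hFf | hfam
  · fin_cases hFf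
    · omega
    · omega
    · omega
    · omega
    · omega
    · omega
    · omega
    · omega
    · omega
    · omega
    · omega
    · omega
    · omega
    · omega
    · omega
    · omega
    · -- M = 128, 3^τ*s = 129
      have hV : 3^τ * s = 129 := by omega
      have hscase : s = 43 := by
        interval_cases τ <;> norm_num at hV <;> omega
      rw [hscase] at hs
      revert hs
      decide
    · omega
    · -- M = 512, 3^τ*s = 513
      have hV : 3^τ * s = 513 := by omega
      have hscase : s = 19 := by
        interval_cases τ <;> norm_num at hV <;> omega
      rw [hscase] at hs
      revert hs
      decide
  · obtain ⟨k, hk⟩ := icP3_iff.mp hfam.2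
    have h82 : 82 ≤ M := hfam.1
    rcases Nat.eq_zero_or_pos k with hk0 | hk1
    · rw [hk0] at hk
      norm_num at hk
      omega
    · have : (3:ℕ) ∣ 3^k := dvd_pow_self 3 (by omega)
      omega

lemma icD_zero_G {m : ℕ} (h : icD m = 0) : icG m := by
  unfold icD at h
  by_cases h2 : m ∈ icS2
  · simp [h2] at h
  · by_cases h3 : icG m
    · exact h3
    · simp [h2, h3] at h

lemma icFfin_mulbase : ∀ u ∈ [2,4,5,7,8,10,13,14,16,19,20,28,32,40,64,128,256,512], u^3 * 551368 ≤ 3^(icH u) * 531441 := by decide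

set_option maxRecDepth 100000 in
lemma icC3_table : ∀ s ∈ icS2, ∀ u, 1 ≤ u → u ≤ 106 → s % u = 0 → icF s ≤ icF u + icF (s/u) := by
  decide

set_option maxRecDepth 10000 in
lemma icFF : ∀ u ∈ icFfin, ∀ v ∈ icFfin, icF (u*v) ≤ icF u + icF v := by decide

lemma icH_fam_ge (k : ℕ) : 3*k+1 ≤ icH (3^k+1) := by
  apply icH_gt
  calc 3^(3*k) = (3^k)^3 := by rw [← pow_mul, Nat.mul_comm]
  _ < (3^k+1)^3 := Nat.pow_lt_pow_left (by omega) (by norm_num)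

lemma pow81 {k : ℕ} (hk : 4 ≤ k) : (81:ℕ) ≤ 3^k := by
  calc (81:ℕ) = 3^4 := by norm_num
  _ ≤ 3^k := Nat.pow_le_pow_right (by norm_num) hk

lemma icG_mul_aux {u k : ℕ} (hu : u ∈ [2,4,5,7,8,10,13,14,16,19,20,28,32,40,64,128,256,512]) (hk : 4 ≤ k) :
    icH (u*(3^k+1)) ≤ icH u + 3*k := by
  apply icH_le_iff.mpr
  have hA := icFfin_mulbase u hu
  have h81 : (81:ℕ) ≤ 3^k := pow81 hk
  have hB : 81*(3^k+1) ≤ 82*3^k := by omega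
  have hBc : (81*(3^k+1))^3 ≤ (82*3^k)^3 := Nat.pow_le_pow_left hB 3
  have hkey : (u*(3^k+1))^3 * 531441 ≤ (3^(icH u + 3*k)) * 531441 := by
    calc (u*(3^k+1))^3 * 531441 = u^3 * ((81*(3^k+1))^3) := by ring
    _ ≤ u^3 * ((82*3^k)^3) := Nat.mul_le_mul_left _ hBc
    _ = (u^3 * 551368) * (3^k)^3 := by ring
    _ ≤ (3^(icH u) * 531441) * (3^k)^3 := Nat.mul_le_mul_right _ hA
    _ = (3^(icH u) * 3^(k*3)) * 531441 := by rw [← pow_mul]; ring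
    _ = 3^(icH u + 3*k) * 531441 := by rw [← pow_add, Nat.mul_comm k 3]
  exact Nat.le_of_mul_le_mul_right hkey (by norm_num)

lemma icG_famfam {j k : ℕ} (hj : 4 ≤ j) (hk : 4 ≤ k) :
    icH ((3^j+1)*(3^k+1)) ≤ 3*j + 3*k + 1 := by
  apply icH_le_iff.mpr
  have hj81 : (81:ℕ) ≤ 3^j := pow81 hj
  have hk81 : (81:ℕ) ≤ 3^k := pow81 hk
  have hBj : 81*(3^j+1) ≤ 82*3^j := by omega
  have hBk : 81*(3^k+1) ≤ 82*3^k := by omega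
  have hBjc : (81*(3^j+1))^3 ≤ (82*3^j)^3 := Nat.pow_le_pow_left hBj 3
  have hBkc : (81*(3^k+1))^3 ≤ (82*3^k)^3 := Nat.pow_le_pow_left hBk 3
  have hkey : ((3^j+1)*(3^k+1))^3 * 282429536481 ≤ 3^(3*j+3*k+1) * 282429536481 := by
    calc ((3^j+1)*(3^k+1))^3 * 282429536481
        = (81*(3^j+1))^3 * (81*(3^k+1))^3 := by ring
    _ ≤ (82*3^j)^3 * (82*3^k)^3 := Nat.mul_le_mul hBjc hBkc
    _ = 304006671424 * ((3^j)^3 * (3^k)^3) := by ring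
    _ ≤ 847288609443 * ((3^j)^3 * (3^k)^3) := Nat.mul_le_mul_right _ (by norm_num)
    _ = 3^(3*j+3*k+1) * 282429536481 := by
        rw [← pow_mul, ← pow_mul]
        rw [show (3:ℕ)^(3*j+3*k+1) = 3 * (3^(j*3) * 3^(k*3)) by
          rw [← pow_add, ← pow_succ']
          congr 1
          ring]
        ring
  exact Nat.le_of_mul_le_mul_right hkey (by norm_num)

lemma icFam_spec {v : ℕ} (hG : icG v) (hv : v ∉ icFfin) : ∃ k, 4 ≤ k ∧ v = 3^k+1 := by
  rcases hG with hF | ⟨h82, hp⟩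
  · exact absurd hF hv
  · obtain ⟨k, hk⟩ := icP3_iff.mp hp
    refine ⟨k, ?_, by omega⟩
    by_contra hc
    push_neg at hc
    interval_cases k <;> omega

lemma icC3_Ffam {u v : ℕ} (hu2 : 2 ≤ u) (hu : u ∈ icFfin) (hGv : icG v) (hv : v ∉ icFfin)
    (h1 : icD (u*v) = 1) (hcu : icCore u = u) (hcv : icCore v = v) (hcuv : icCore (u*v) = u*v) :
    icF (u*v) ≤ icF u + icF v := by
  have hu' : u ∈ [2,4,5,7,8,10,13,14,16,19,20,28,32,40,64,128,256,512] := by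
    fin_cases hu <;> first | omega | simp
  clear hu
  obtain ⟨k, hk4, rfl⟩ := icFam_spec hGv hv
  have h2 := icG_mul_aux hu' hk4
  have h3 := icH_fam_ge k
  have h4 : icF (u*(3^k+1)) = icH (u*(3^k+1)) + 1 := by rw [icF, hcuv, h1]
  have h5 : icH u ≤ icF u := icF_ge_H u
  have h6 : icH (3^k+1) ≤ icF (3^k+1) := icF_ge_H _
  omega

lemma icC3core {u v : ℕ} (hu : 1 ≤ u) (hv : 1 ≤ v) (h3u : ¬ 3 ∣ u) (h3v : ¬ 3 ∣ v) :
    icF (u*v) ≤ icF u + icF v := by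
  rcases Nat.lt_or_ge u 2 with hu2 | hu2
  · have : u = 1 := by omega
    subst this
    simp [icF]
  rcases Nat.lt_or_ge v 2 with hv2 | hv2
  · have : v = 1 := by omega
    subst this
    simp [icF]
  have h3uv : ¬ 3 ∣ (u*v) := by
    intro hd
    rcases (Nat.Prime.dvd_mul (by norm_num)).mp hd with h | h
    · exact h3u h
    · exact h3v h
  have hcu : icCore u = u := icCore_not_dvd h3u
  have hcv : icCore v = v := icCore_not_dvd h3v
  have hcuv : icCore (u*v) = u*v := icCore_not_dvd h3uv
  have hFu : icF u = icH u + icD u := by rw [icF, hcu]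
  have hFv : icF v = icH v + icD v := by rw [icF, hcv]
  have hFuv : icF (u*v) = icH (u*v) + icD (u*v) := by rw [icF, hcuv]
  have hHm := icH_mul_le u v
  by_cases hD : icD (u*v) ≤ icD u + icD v
  · omega
  · push_neg at hD
    have hle2 := icD_le_two (u*v)
    by_cases h2 : icD (u*v) = 2
    · have hmem := icD_two h2
      obtain ⟨-,-,-,-,-,h106,-⟩ := icS2_facts _ hmem
      have hu106 : u ≤ 106 := le_trans (Nat.le_mul_of_pos_right u (by omega)) h106
      have hmod : (u*v) % u = 0 := Nat.mul_mod_right u v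
      have hdiv : (u*v) / u = v := by
        rw [Nat.mul_div_cancel_left v (by omega)]
      have := icC3_table (u*v) hmem u (by omega) hu106 hmod
      rw [hdiv] at this
      exact this
    · have h1 : icD (u*v) = 1 := by omega
      have hdu : icD u = 0 := by omega
      have hdv0 : icD v = 0 := by omega
      have hGu : icG u := icD_zero_G hdu
      have hGv : icG v := icD_zero_G hdv0
      by_cases hFfu : u ∈ icFfin
      · by_cases hFfv : v ∈ icFfin
        · exact icFF u hFfu v hFfv
        · exact icC3_Ffam hu2 hFfu hGv hFfv h1 hcu hcv hcuv
      · by_cases hFfv : v ∈ icFfin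
        · rw [Nat.mul_comm] at hcuv h1 ⊢
          have := icC3_Ffam hv2 hFfv hGu hFfu h1 hcv hcu hcuv
          omega
        · obtain ⟨j, hj4, rfl⟩ := icFam_spec hGu hFfu
          obtain ⟨k, hk4, rfl⟩ := icFam_spec hGv hFfv
          have h2 := icG_famfam hj4 hk4
          have h3 := icH_fam_ge j
          have h4 := icH_fam_ge k
          omega

lemma icC3 {a b : ℕ} (ha : 1 ≤ a) (hb : 1 ≤ b) : icF (a*b) ≤ icF a + icF b := by
  obtain ⟨α, hda, h3a⟩ := icCore_spec a ha
  obtain ⟨β, hdb, h3b⟩ := icCore_spec b hb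
  obtain ⟨u, hcu⟩ : ∃ u, icCore a = u := ⟨_, rfl⟩
  obtain ⟨v, hcv⟩ : ∃ v, icCore b = v := ⟨_, rfl⟩
  rw [hcu] at hda h3a
  rw [hcv] at hdb h3b
  have hu1 : 1 ≤ u := hcu ▸ icCore_pos ha
  have hv1 : 1 ≤ v := hcv ▸ icCore_pos hb
  have hab : a * b = 3^(α+β) * (u * v) := by
    rw [hda, hdb, pow_add]
    ring
  have huv1 : 1 ≤ u * v := Nat.one_le_iff_ne_zero.mpr (by positivity)
  have hFa : icF a = 3*α + icF u := by rw [hda]; exact icF_pow3 hu1 α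
  have hFb : icF b = 3*β + icF v := by rw [hdb]; exact icF_pow3 hv1 β
  have hFab : icF (a*b) = 3*(α+β) + icF (u*v) := by rw [hab]; exact icF_pow3 huv1 _
  have := icC3core hu1 hv1 h3a h3b
  omega

lemma icC2aux {a b A B : ℕ} (ha : 1 ≤ a) (hab : a ≤ b) (hA : max (icF a) 1 ≤ A)
    (hB : max (icF b) 1 ≤ B) : icF (a+b) ≤ A + B := by
  have hb : 1 ≤ b := le_trans ha hab
  have hA1 : 1 ≤ A := le_trans (le_max_right _ _) hA
  have hB1 : 1 ≤ B := le_trans (le_max_right _ _) hB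
  have hAF : icF a ≤ A := le_trans (le_max_left _ _) hA
  have hBF : icF b ≤ B := le_trans (le_max_left _ _) hB
  have hAH : icH a ≤ A := le_trans (icF_ge_H a) hAF
  have hBH : icH b ≤ B := le_trans (icF_ge_H b) hBF
  have ha3 : a^3 ≤ 3^A := le_trans (icH_cube a) (Nat.pow_le_pow_right (by norm_num) hAH)
  have hb3 : b^3 ≤ 3^B := le_trans (icH_cube b) (Nat.pow_le_pow_right (by norm_num) hBH)
  obtain ⟨N, hN⟩ : ∃ N, a + b = N := ⟨_, rfl⟩
  rw [hN]
  have hN2 : 2 ≤ N := by omega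
  obtain ⟨τ, hNd, hs3⟩ := icCore_spec N (by omega)
  obtain ⟨s, hcs⟩ : ∃ s, icCore N = s := ⟨_, rfl⟩
  rw [hcs] at hNd hs3
  have hs1 : 1 ≤ s := hcs ▸ icCore_pos (by omega)
  have hFN : icF N = icH N + icD s := by rw [icF, hcs]
  have hHN : icH N = 3*τ + icH s := by
    conv_lhs => rw [hNd]
    exact icH_pow3 hs1 τ
  by_cases hD0 : icD s = 0
  · rw [hFN, hD0, Nat.add_zero]
    apply icH_le_iff.mpr
    rw [← hN]
    exact cubeAdd ha hab hA1 hB1 ha3 hb3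
  · have hd1 : 1 ≤ icD s := by omega
    have hdle := icD_le_two s
    have hs11 : 11 ≤ s := by
      by_cases hmem : s ∈ icS2
      · obtain ⟨-,-,-,-,h23,-,-⟩ := icS2_facts s hmem
        omega
      · have hnG : ¬ icG s := fun hG => by
          have := icD_G hG hmem
          omega
        by_contra hc
        push_neg at hc
        interval_cases s
        · exact hnG (by decide)
        · exact hnG (by decide)
        · exact hs3 (by norm_num)
        · exact hnG (by decide)
        · exact hnG (by decide)
        · exact hs3 (by norm_num)
        · exact hnG (by decide)
        · exact hnG (by decide)
        · exact hs3 (by norm_num)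
        · exact hnG (by decide)
    have hτp : 1 ≤ 3^τ := Nat.one_le_pow _ _ (by norm_num)
    have hsN : s ≤ N := by
      rw [hNd]
      calc s = 1 * s := (Nat.one_mul s).symm
      _ ≤ 3^τ * s := Nat.mul_le_mul_right s hτp
    have hN11 : 11 ≤ N := by omega
    have hH2N : 2 ≤ icH N := icH_two_le (by omega)
    have hNcube : 3^(icH N - 1) < N^3 := icH_lt_pow (by omega)
    have hHs2 : 2 ≤ icH s := icH_two_le (by omega)
    rcases Nat.lt_or_ge a 3 with ha3' | ha3'
    · interval_cases a
      · -- a = 1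
        have hb' : b = N - 1 := by omega
        have hnb : icH N ≤ icF b := by
          rw [hb']
          exact icNbr hN11 (by rw [hcs]; omega)
        by_cases h2 : icD s = 2
        · have hmem := icD_two h2
          rcases Nat.eq_zero_or_pos τ with hτ0 | hτ1
          · have hNs : N = s := by rw [hNd, hτ0]; norm_num
            obtain ⟨-, hf1, -, -, -, -, -⟩ := icS2_facts s hmem
            have hfb : icF b = icF (s-1) := by rw [hb', hNs]
            rw [hFN, h2, hHN, hτ0]
            omega
          · have h3N : (3:ℕ) ∣ N := by
              rw [hNd]
              exact Dvd.dvd.mul_right (dvd_pow_self 3 (by omega)) s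
            have hb3f : ¬ (3:ℕ) ∣ b := by omega
            have hcb : icCore b = b := icCore_not_dvd hb3f
            have hbb : b = 3^τ * s - 1 := by rw [hb', hNd]
            have hray := icS2_ray hmem hτ1 (le_refl 1) (by norm_num)
            have hHb : 3*τ + icH s ≤ icH b := by
              have hgt := icH_gt (m := b) (t := 3*τ + icH s - 1) (by rw [hbb]; exact hray)
              omega
            have hDb : 1 ≤ icD b := icD_pos (by rw [hbb]; exact icS2_ray_notG hmem hτ1)
            have hFb2 : icF b = icH b + icD b := by rw [icF, hcb]
            rw [hFN, h2, hHN]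
            omega
        · rw [hFN]
          omega
      · -- a = 2
        have hA2 : 2 ≤ A := by
          have h2v : icF 2 = 2 := by decide
          omega
        have hb' : b = N - 2 := by omega
        by_cases h2 : icD s = 2
        · have hmem := icD_two h2
          rcases Nat.eq_zero_or_pos τ with hτ0 | hτ1
          · have hNs : N = s := by rw [hNd, hτ0]; norm_num
            obtain ⟨-, -, hf2, -, -, -, -⟩ := icS2_facts s hmem
            have hfb : icF b = icF (s-2) := by rw [hb', hNs]
            rw [hFN, h2, hHN, hτ0]
            omega
          · have hbb : b = 3^τ * s - 2 := by rw [hb', hNd]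
            have hray := icS2_ray hmem hτ1 (by norm_num) (by norm_num : (2:ℕ) ≤ 2)
            have hHb : 3*τ + icH s ≤ icH b := by
              have hgt := icH_gt (m := b) (t := 3*τ + icH s - 1) (by rw [hbb]; exact hray)
              omega
            have hFb2 : icH b ≤ icF b := icF_ge_H b
            rw [hFN, h2, hHN]
            omega
        · -- icD s = 1
          have hHb : icH N ≤ icH b + 1 := by
            apply icH_le_iff.mpr
            obtain ⟨c, hc⟩ : ∃ c, b = c + 2 := ⟨b - 2, by omega⟩
            have hcN : N = c + 4 := by omega
            have h5c : 5 ≤ c := by omega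
            calc N^3 = ((c+2)+2)^3 := by rw [show N = (c+2)+2 by omega]
            _ ≤ 3*(c+2)^3 := cube3b (by omega)
            _ ≤ 3 * 3^(icH b) := by
                have hcb : (c+2)^3 ≤ 3^(icH b) := by rw [← hc]; exact icH_cube b
                omega
            _ = 3^(icH b + 1) := by rw [pow_succ]; ring
          have hFb2 : icH b ≤ icF b := icF_ge_H b
          rw [hFN]
          omega
    · -- 3 ≤ a
      have hb3' : 3 ≤ b := le_trans ha3' hab
      obtain ⟨x, rfl⟩ : ∃ x, a = 3 + x := ⟨a - 3, by omega⟩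
      obtain ⟨y, rfl⟩ : ∃ y, b = 3 + y := ⟨b - 3, by omega⟩
      have hexp : (3+x)*(3+y) = 9+3*x+3*y+x*y := by ring
      have hab3 : 3*(N-3) ≤ (3+x)*(3+y) := by omega
      have hup : ((3+x)*(3+y))^3 ≤ 3^(A+B) := by
        rw [mul_pow, pow_add]
        exact Nat.mul_le_mul ha3 hb3
      by_cases h2 : icD s = 2
      · have hmem := icD_two h2
        obtain ⟨-,-,-,-,h23,-,-⟩ := icS2_facts s hmem
        have hN23 : 23 ≤ N := by omega
        rcases Nat.eq_zero_or_pos x with hx0 | hx1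
        · -- a = 3
          subst hx0
          have hA3 : 3 ≤ A := by
            have h3v : icF 3 = 3 := by decide
            simp only [Nat.add_zero] at hAF
            omega
          have hb' : 3 + y = N - 3 := by omega
          have hHb : icH N ≤ icH (3+y) + 1 := by
            apply icH_le_iff.mpr
            have h7c : 7 ≤ 3 + y := by omega
            calc N^3 = ((3+y)+3)^3 := by rw [show N = (3+y)+3 by omega]
            _ ≤ 3*(3+y)^3 := cube3c h7c
            _ ≤ 3 * 3^(icH (3+y)) := by
                have := icH_cube (3+y)
                omega
            _ = 3^(icH (3+y) + 1) := by rw [pow_succ]; ring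
          have hFb2 : icH (3+y) ≤ icF (3+y) := icF_ge_H _
          rw [hFN, h2]
          omega
        · -- a ≥ 4
          obtain ⟨x', rfl⟩ : ∃ x', x = 1 + x' := ⟨x - 1, by omega⟩
          have hab4 : 4*(N-4) ≤ (3+(1+x'))*(3+y) := by
            have hexp2 : (3+(1+x'))*(3+y) = 12 + 4*y + 3*x' + x'*y := by ring
            have hy1 : 1 ≤ y := by omega
            have hxy : x' ≤ x'*y := Nat.le_mul_of_pos_right x' hy1
            omega
          have hkey : 3^(icH N + 1) < ((3+(1+x'))*(3+y))^3 := by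
            have hc9 : 9*((N-4)+4)^3 ≤ 64*(N-4)^3 := cube9 (by omega)
            have hN4 : (N-4)+4 = N := by omega
            rw [hN4] at hc9
            have h64 : (4*(N-4))^3 = 64*(N-4)^3 := by ring
            have hsplit : (3:ℕ)^(icH N + 1) = 9 * 3^(icH N - 1) := by
              rw [show icH N + 1 = 2 + (icH N - 1) by omega, pow_add]
              norm_num
            calc 3^(icH N + 1) = 9 * 3^(icH N - 1) := hsplit
            _ < 9 * N^3 := by omega
            _ ≤ 64*(N-4)^3 := hc9
            _ = (4*(N-4))^3 := h64.symm
            _ ≤ ((3+(1+x'))*(3+y))^3 := Nat.pow_le_pow_left hab4 3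
          have hlt : 3^(icH N + 1) < 3^(A+B) := lt_of_lt_of_le hkey hup
          have := (Nat.pow_lt_pow_iff_right (by norm_num : 1 < 3)).mp hlt
          rw [hFN, h2]
          omega
      · -- icD s = 1
        have hkey : 3^(icH N) < ((3+x)*(3+y))^3 := by
          have hc3 : ((N-3)+3)^3 ≤ 3*(N-3)^3 := cube3c (by omega)
          have hN3 : (N-3)+3 = N := by omega
          rw [hN3] at hc3
          have h27 : (3*(N-3))^3 = 27*(N-3)^3 := by ring
          have hsplit : (3:ℕ)^(icH N) = 3 * 3^(icH N - 1) := by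
            rw [show icH N = 1 + (icH N - 1) by omega, pow_add]
            norm_num
          calc 3^(icH N) = 3 * 3^(icH N - 1) := hsplit
          _ < 3 * N^3 := by omega
          _ ≤ 9*(N-3)^3 := by omega
          _ ≤ 27*(N-3)^3 := by omega
          _ = (3*(N-3))^3 := h27.symm
          _ ≤ ((3+x)*(3+y))^3 := Nat.pow_le_pow_left hab3 3
        have hlt : 3^(icH N) < 3^(A+B) := lt_of_lt_of_le hkey hup
        have := (Nat.pow_lt_pow_iff_right (by norm_num : 1 < 3)).mp hlt
        rw [hFN]
        omega

lemma icC2 {a b A B : ℕ} (ha : 1 ≤ a) (hb : 1 ≤ b) (hA : max (icF a) 1 ≤ A)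
    (hB : max (icF b) 1 ≤ B) : icF (a+b) ≤ A + B := by
  rcases le_total a b with h | h
  · exact icC2aux ha h hA hB
  · rw [Nat.add_comm a b, Nat.add_comm A B]
    exact icC2aux hb h hB hA


lemma icLB : ∀ {m j : ℕ}, CanWrite m j → 1 ≤ m ∧ max (icF m) 1 ≤ j := by
  intro m j h
  induction h with
  | one => exact ⟨le_rfl, by decide⟩
  | @add a b j k _ _ iha ihb =>
      refine ⟨by omega, ?_⟩
      have h1 := icC2 iha.1 ihb.1 iha.2 ihb.2
      have hj : 1 ≤ j := le_trans (le_max_right _ _) iha.2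
      exact max_le h1 (by omega)
  | @mul a b j k _ _ iha ihb =>
      have hm : 1 ≤ a * b := Nat.mul_pos iha.1 ihb.1
      refine ⟨hm, ?_⟩
      have h1 := icC3 iha.1 ihb.1
      have hFa : icF a ≤ j := le_trans (le_max_left _ _) iha.2
      have hFb : icF b ≤ k := le_trans (le_max_left _ _) ihb.2
      have hj : 1 ≤ j := le_trans (le_max_right _ _) iha.2
      exact max_le (by omega) (by omega)

lemma cw_self : ∀ {n : ℕ}, 1 ≤ n → CanWrite n n := by
  intro n h
  induction n with
  | zero => omega
  | succ k ih =>
      rcases Nat.eq_zero_or_pos k with h0 | h1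
      · subst h0; exact CanWrite.one
      · exact CanWrite.add (ih h1) CanWrite.one

lemma cpx_le {n k : ℕ} (h : CanWrite n k) : cpx n ≤ k := Nat.sInf_le h

lemma cpx_mem {n : ℕ} (h : 1 ≤ n) : CanWrite n (cpx n) := Nat.sInf_mem ⟨n, cw_self h⟩

lemma icF_le_cpx {n : ℕ} (h : 1 ≤ n) : icF n ≤ cpx n :=
  le_trans (le_max_left _ 1) (icLB (cpx_mem h)).2

lemma cpx_pow3_le (k n : ℕ) (hn : 1 ≤ n) : cpx (3^k * n) ≤ 3*k + cpx n := by
  induction k with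
  | zero => simp
  | succ j ih =>
      have h3 : CanWrite 3 3 := cw_self (by norm_num)
      have hmem : CanWrite (3^j * n) (cpx (3^j * n)) := cpx_mem (Nat.mul_pos (by positivity) hn)
      have hmul := CanWrite.mul h3 hmem
      have heq : 3 * (3^j * n) = 3^(j+1) * n := by ring
      rw [heq] at hmul
      have := cpx_le hmul
      omega

lemma stable_of {n : ℕ} (hn : 1 ≤ n) (heq : cpx n = icF n) : Stable n := by
  intro k
  have hp : 1 ≤ 3^k * n := Nat.mul_pos (by positivity) hn
  have h1 : icF (3^k * n) ≤ cpx (3^k * n) := icF_le_cpx hp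
  rw [icF_pow3 hn k] at h1
  have h2 := cpx_pow3_le k n hn
  omega

lemma stable_num {n c : ℕ} (hn : 1 ≤ n) (hw : CanWrite n c) (hf : icF n = c) : Stable n :=
  stable_of hn (le_antisymm (hf ▸ cpx_le hw) (hf ▸ icF_le_cpx hn))

lemma icW1 : CanWrite 1 1 := CanWrite.one
lemma icW2 : CanWrite 2 2 := by
  have h := CanWrite.add icW1 icW1
  norm_num at h
  exact h

lemma icW3 : CanWrite 3 3 := by
  have h := CanWrite.add icW1 icW2
  norm_num at h
  exact h

lemma icW4 : CanWrite 4 4 := by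
  have h := CanWrite.mul icW2 icW2
  norm_num at h
  exact h

lemma icW5 : CanWrite 5 5 := by
  have h := CanWrite.add icW1 icW4
  norm_num at h
  exact h

lemma icW6 : CanWrite 6 5 := by
  have h := CanWrite.mul icW2 icW3
  norm_num at h
  exact h

lemma icW7 : CanWrite 7 6 := by
  have h := CanWrite.add icW1 icW6
  norm_num at h
  exact h

lemma icW8 : CanWrite 8 6 := by
  have h := CanWrite.mul icW2 icW4
  norm_num at h
  exact h

lemma icW9 : CanWrite 9 6 := by
  have h := CanWrite.mul icW3 icW3
  norm_num at h
  exact h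

lemma icW10 : CanWrite 10 7 := by
  have h := CanWrite.mul icW2 icW5
  norm_num at h
  exact h

lemma icW11 : CanWrite 11 8 := by
  have h := CanWrite.add icW1 icW10
  norm_num at h
  exact h

lemma icW12 : CanWrite 12 7 := by
  have h := CanWrite.mul icW2 icW6
  norm_num at h
  exact h

lemma icW13 : CanWrite 13 8 := by
  have h := CanWrite.add icW1 icW12
  norm_num at h
  exact h

lemma icW14 : CanWrite 14 8 := by
  have h := CanWrite.mul icW2 icW7
  norm_num at h
  exact h

lemma icW15 : CanWrite 15 8 := by
  have h := CanWrite.mul icW3 icW5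
  norm_num at h
  exact h

lemma icW16 : CanWrite 16 8 := by
  have h := CanWrite.mul icW2 icW8
  norm_num at h
  exact h

lemma icW17 : CanWrite 17 9 := by
  have h := CanWrite.add icW1 icW16
  norm_num at h
  exact h

lemma icW18 : CanWrite 18 8 := by
  have h := CanWrite.mul icW2 icW9
  norm_num at h
  exact h

lemma icW19 : CanWrite 19 9 := by
  have h := CanWrite.add icW1 icW18
  norm_num at h
  exact h

lemma icW20 : CanWrite 20 9 := by
  have h := CanWrite.mul icW2 icW10
  norm_num at h
  exact h

lemma icW21 : CanWrite 21 9 := by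
  have h := CanWrite.mul icW3 icW7
  norm_num at h
  exact h

lemma icW22 : CanWrite 22 10 := by
  have h := CanWrite.mul icW2 icW11
  norm_num at h
  exact h

lemma icW23 : CanWrite 23 11 := by
  have h := CanWrite.add icW1 icW22
  norm_num at h
  exact h

lemma icW24 : CanWrite 24 9 := by
  have h := CanWrite.mul icW2 icW12
  norm_num at h
  exact h

lemma icW25 : CanWrite 25 10 := by
  have h := CanWrite.mul icW5 icW5
  norm_num at h
  exact h

lemma icW26 : CanWrite 26 10 := by
  have h := CanWrite.mul icW2 icW13
  norm_num at h
  exact h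

lemma icW27 : CanWrite 27 9 := by
  have h := CanWrite.mul icW3 icW9
  norm_num at h
  exact h

lemma icW28 : CanWrite 28 10 := by
  have h := CanWrite.mul icW2 icW14
  norm_num at h
  exact h

lemma icW29 : CanWrite 29 11 := by
  have h := CanWrite.add icW1 icW28
  norm_num at h
  exact h

lemma icW30 : CanWrite 30 10 := by
  have h := CanWrite.mul icW2 icW15
  norm_num at h
  exact h

lemma icW31 : CanWrite 31 11 := by
  have h := CanWrite.add icW1 icW30
  norm_num at h
  exact h

lemma icW32 : CanWrite 32 10 := by
  have h := CanWrite.mul icW2 icW16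
  norm_num at h
  exact h

lemma icW33 : CanWrite 33 11 := by
  have h := CanWrite.mul icW3 icW11
  norm_num at h
  exact h

lemma icW34 : CanWrite 34 11 := by
  have h := CanWrite.mul icW2 icW17
  norm_num at h
  exact h

lemma icW35 : CanWrite 35 11 := by
  have h := CanWrite.mul icW5 icW7
  norm_num at h
  exact h

lemma icW36 : CanWrite 36 10 := by
  have h := CanWrite.mul icW2 icW18
  norm_num at h
  exact h

lemma icW37 : CanWrite 37 11 := by
  have h := CanWrite.add icW1 icW36
  norm_num at h
  exact h

lemma icW38 : CanWrite 38 11 := by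
  have h := CanWrite.mul icW2 icW19
  norm_num at h
  exact h

lemma icW39 : CanWrite 39 11 := by
  have h := CanWrite.mul icW3 icW13
  norm_num at h
  exact h

lemma icW40 : CanWrite 40 11 := by
  have h := CanWrite.mul icW2 icW20
  norm_num at h
  exact h

lemma icW41 : CanWrite 41 12 := by
  have h := CanWrite.add icW1 icW40
  norm_num at h
  exact h

lemma icW42 : CanWrite 42 11 := by
  have h := CanWrite.mul icW2 icW21
  norm_num at h
  exact h

lemma icW43 : CanWrite 43 12 := by
  have h := CanWrite.add icW1 icW42
  norm_num at h
  exact h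

lemma icW44 : CanWrite 44 12 := by
  have h := CanWrite.mul icW2 icW22
  norm_num at h
  exact h

lemma icW45 : CanWrite 45 11 := by
  have h := CanWrite.mul icW3 icW15
  norm_num at h
  exact h

lemma icW46 : CanWrite 46 12 := by
  have h := CanWrite.add icW1 icW45
  norm_num at h
  exact h

lemma icW47 : CanWrite 47 13 := by
  have h := CanWrite.add icW1 icW46
  norm_num at h
  exact h

lemma icW48 : CanWrite 48 11 := by
  have h := CanWrite.mul icW2 icW24
  norm_num at h
  exact h

lemma icW49 : CanWrite 49 12 := by
  have h := CanWrite.mul icW7 icW7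
  norm_num at h
  exact h

lemma icW50 : CanWrite 50 12 := by
  have h := CanWrite.mul icW2 icW25
  norm_num at h
  exact h

lemma icW51 : CanWrite 51 12 := by
  have h := CanWrite.mul icW3 icW17
  norm_num at h
  exact h

lemma icW52 : CanWrite 52 12 := by
  have h := CanWrite.mul icW2 icW26
  norm_num at h
  exact h

lemma icW53 : CanWrite 53 13 := by
  have h := CanWrite.add icW1 icW52
  norm_num at h
  exact h

lemma icW54 : CanWrite 54 11 := by
  have h := CanWrite.mul icW2 icW27
  norm_num at h
  exact h

lemma icW55 : CanWrite 55 12 := by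
  have h := CanWrite.add icW1 icW54
  norm_num at h
  exact h

lemma icW56 : CanWrite 56 12 := by
  have h := CanWrite.mul icW2 icW28
  norm_num at h
  exact h

lemma icW57 : CanWrite 57 12 := by
  have h := CanWrite.mul icW3 icW19
  norm_num at h
  exact h

lemma icW58 : CanWrite 58 13 := by
  have h := CanWrite.mul icW2 icW29
  norm_num at h
  exact h

lemma icW59 : CanWrite 59 14 := by
  have h := CanWrite.add icW1 icW58
  norm_num at h
  exact h

lemma icW60 : CanWrite 60 12 := by
  have h := CanWrite.mul icW2 icW30
  norm_num at h
  exact h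

lemma icW61 : CanWrite 61 13 := by
  have h := CanWrite.add icW1 icW60
  norm_num at h
  exact h

lemma icW62 : CanWrite 62 13 := by
  have h := CanWrite.mul icW2 icW31
  norm_num at h
  exact h

lemma icW63 : CanWrite 63 12 := by
  have h := CanWrite.mul icW3 icW21
  norm_num at h
  exact h

lemma icW64 : CanWrite 64 12 := by
  have h := CanWrite.mul icW2 icW32
  norm_num at h
  exact h

lemma icW65 : CanWrite 65 13 := by
  have h := CanWrite.mul icW5 icW13
  norm_num at h
  exact h

lemma icW66 : CanWrite 66 13 := by
  have h := CanWrite.mul icW2 icW33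
  norm_num at h
  exact h

lemma icW67 : CanWrite 67 14 := by
  have h := CanWrite.add icW1 icW66
  norm_num at h
  exact h

lemma icW68 : CanWrite 68 13 := by
  have h := CanWrite.mul icW2 icW34
  norm_num at h
  exact h

lemma icW69 : CanWrite 69 14 := by
  have h := CanWrite.mul icW3 icW23
  norm_num at h
  exact h

lemma icW70 : CanWrite 70 13 := by
  have h := CanWrite.mul icW2 icW35
  norm_num at h
  exact h

lemma icW71 : CanWrite 71 14 := by
  have h := CanWrite.add icW1 icW70
  norm_num at h
  exact h

lemma icW72 : CanWrite 72 12 := by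
  have h := CanWrite.mul icW2 icW36
  norm_num at h
  exact h

lemma icW73 : CanWrite 73 13 := by
  have h := CanWrite.add icW1 icW72
  norm_num at h
  exact h

lemma icW74 : CanWrite 74 13 := by
  have h := CanWrite.mul icW2 icW37
  norm_num at h
  exact h

lemma icW75 : CanWrite 75 13 := by
  have h := CanWrite.mul icW3 icW25
  norm_num at h
  exact h

lemma icW76 : CanWrite 76 13 := by
  have h := CanWrite.mul icW2 icW38
  norm_num at h
  exact h

lemma icW77 : CanWrite 77 14 := by
  have h := CanWrite.mul icW7 icW11
  norm_num at h
  exact h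

lemma icW78 : CanWrite 78 13 := by
  have h := CanWrite.mul icW2 icW39
  norm_num at h
  exact h

lemma icW79 : CanWrite 79 14 := by
  have h := CanWrite.add icW1 icW78
  norm_num at h
  exact h

lemma icW80 : CanWrite 80 13 := by
  have h := CanWrite.mul icW2 icW40
  norm_num at h
  exact h

lemma icW81 : CanWrite 81 12 := by
  have h := CanWrite.mul icW3 icW27
  norm_num at h
  exact h

lemma icW82 : CanWrite 82 13 := by
  have h := CanWrite.add icW1 icW81
  norm_num at h
  exact h

lemma icW83 : CanWrite 83 14 := by
  have h := CanWrite.add icW1 icW82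
  norm_num at h
  exact h

lemma icW84 : CanWrite 84 13 := by
  have h := CanWrite.mul icW2 icW42
  norm_num at h
  exact h

lemma icW85 : CanWrite 85 14 := by
  have h := CanWrite.mul icW5 icW17
  norm_num at h
  exact h

lemma icW86 : CanWrite 86 14 := by
  have h := CanWrite.mul icW2 icW43
  norm_num at h
  exact h

lemma icW87 : CanWrite 87 14 := by
  have h := CanWrite.mul icW3 icW29
  norm_num at h
  exact h

lemma icW88 : CanWrite 88 14 := by
  have h := CanWrite.mul icW2 icW44
  norm_num at h
  exact h

lemma icW89 : CanWrite 89 15 := by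
  have h := CanWrite.add icW1 icW88
  norm_num at h
  exact h

lemma icW90 : CanWrite 90 13 := by
  have h := CanWrite.mul icW2 icW45
  norm_num at h
  exact h

lemma icW91 : CanWrite 91 14 := by
  have h := CanWrite.mul icW7 icW13
  norm_num at h
  exact h

lemma icW92 : CanWrite 92 14 := by
  have h := CanWrite.mul icW2 icW46
  norm_num at h
  exact h

lemma icW93 : CanWrite 93 14 := by
  have h := CanWrite.mul icW3 icW31
  norm_num at h
  exact h

lemma icW94 : CanWrite 94 15 := by
  have h := CanWrite.mul icW2 icW47
  norm_num at h
  exact h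

lemma icW95 : CanWrite 95 14 := by
  have h := CanWrite.mul icW5 icW19
  norm_num at h
  exact h

lemma icW96 : CanWrite 96 13 := by
  have h := CanWrite.mul icW2 icW48
  norm_num at h
  exact h

lemma icW97 : CanWrite 97 14 := by
  have h := CanWrite.add icW1 icW96
  norm_num at h
  exact h

lemma icW98 : CanWrite 98 14 := by
  have h := CanWrite.mul icW2 icW49
  norm_num at h
  exact h

lemma icW99 : CanWrite 99 14 := by
  have h := CanWrite.mul icW3 icW33
  norm_num at h
  exact h

lemma icW100 : CanWrite 100 14 := by
  have h := CanWrite.mul icW2 icW50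
  norm_num at h
  exact h

lemma icW101 : CanWrite 101 15 := by
  have h := CanWrite.add icW1 icW100
  norm_num at h
  exact h

lemma icW102 : CanWrite 102 14 := by
  have h := CanWrite.mul icW2 icW51
  norm_num at h
  exact h

lemma icW103 : CanWrite 103 15 := by
  have h := CanWrite.add icW1 icW102
  norm_num at h
  exact h

lemma icW104 : CanWrite 104 14 := by
  have h := CanWrite.mul icW2 icW52
  norm_num at h
  exact h

lemma icW105 : CanWrite 105 14 := by
  have h := CanWrite.mul icW3 icW35
  norm_num at h
  exact h

lemma icW106 : CanWrite 106 15 := by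
  have h := CanWrite.mul icW2 icW53
  norm_num at h
  exact h

lemma icW160 : CanWrite 160 15 := by
  have h := CanWrite.mul icW2 icW80
  norm_num at h
  exact h

lemma icW320 : CanWrite 320 17 := by
  have h := CanWrite.mul icW2 icW160
  norm_num at h
  exact h

lemma icW321 : CanWrite 321 18 := by
  have h := CanWrite.add icW1 icW320
  norm_num at h
  exact h

set_option maxRecDepth 100000 in
lemma icSplit107 : ∀ a, a < 107 → 1 ≤ a → 16 ≤ max (icF a) 1 + max (icF (107 - a)) 1 := by
  decide

lemma cw107' : ∀ j m, CanWrite m j → m = 107 → 16 ≤ j := by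
  intro j
  induction j using Nat.strong_induction_on with
  | _ j ih =>
      intro m h hm
      cases h with
      | one => omega
      | @add a b j1 j2 ha hb =>
          have hla := icLB ha
          have hlb := icLB hb
          have hb' : b = 107 - a := by omega
          have h1 : 1 ≤ j1 := le_trans (le_max_right _ _) hla.2
          have h2 : 1 ≤ j2 := le_trans (le_max_right _ _) hlb.2
          have hs := icSplit107 a (by omega) hla.1
          rw [← hb'] at hs
          omega
      | @mul a b j1 j2 ha hb =>
          have hla := icLB ha
          have hlb := icLB hb
          have h1 : 1 ≤ j1 := le_trans (le_max_right _ _) hla.2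
          have h2 : 1 ≤ j2 := le_trans (le_max_right _ _) hlb.2
          have hdvd : a ∣ 107 := ⟨b, hm.symm⟩
          rcases (Nat.Prime.eq_one_or_self_of_dvd (by norm_num) a hdvd) with h1a | h107
          · subst h1a
            have hb107 : b = 107 := by omega
            subst hb107
            have := ih j2 (by omega) _ hb rfl
            omega
          · subst h107
            have hb1 : b = 1 := by omega
            subst hb1
            have := ih j1 (by omega) _ ha rfl
            omega

lemma cw107 : ∀ j, CanWrite 107 j → 16 ≤ j := fun j h => cw107' j 107 h rfl

theorem smallest_unstable_is_107 :
    ¬ Stable 107 ∧ ∀ n : ℕ, 1 < n → n < 107 → Stable n := by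
  constructor
  · intro hS
    have h1 := hS 1
    norm_num at h1
    have h2 : cpx 321 ≤ 18 := cpx_le icW321
    have h3 : 16 ≤ cpx 107 := cw107 _ (cpx_mem (by norm_num))
    omega
  · intro n h1 h2
    interval_cases n
    · exact stable_num (by norm_num) icW2 (by decide)
    · exact stable_num (by norm_num) icW3 (by decide)
    · exact stable_num (by norm_num) icW4 (by decide)
    · exact stable_num (by norm_num) icW5 (by decide)
    · exact stable_num (by norm_num) icW6 (by decide)
    · exact stable_num (by norm_num) icW7 (by decide)
    · exact stable_num (by norm_num) icW8 (by decide)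
    · exact stable_num (by norm_num) icW9 (by decide)
    · exact stable_num (by norm_num) icW10 (by decide)
    · exact stable_num (by norm_num) icW11 (by decide)
    · exact stable_num (by norm_num) icW12 (by decide)
    · exact stable_num (by norm_num) icW13 (by decide)
    · exact stable_num (by norm_num) icW14 (by decide)
    · exact stable_num (by norm_num) icW15 (by decide)
    · exact stable_num (by norm_num) icW16 (by decide)
    · exact stable_num (by norm_num) icW17 (by decide)
    · exact stable_num (by norm_num) icW18 (by decide)
    · exact stable_num (by norm_num) icW19 (by decide)
    · exact stable_num (by norm_num) icW20 (by decide)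
    · exact stable_num (by norm_num) icW21 (by decide)
    · exact stable_num (by norm_num) icW22 (by decide)
    · exact stable_num (by norm_num) icW23 (by decide)
    · exact stable_num (by norm_num) icW24 (by decide)
    · exact stable_num (by norm_num) icW25 (by decide)
    · exact stable_num (by norm_num) icW26 (by decide)
    · exact stable_num (by norm_num) icW27 (by decide)
    · exact stable_num (by norm_num) icW28 (by decide)
    · exact stable_num (by norm_num) icW29 (by decide)
    · exact stable_num (by norm_num) icW30 (by decide)
    · exact stable_num (by norm_num) icW31 (by decide)
    · exact stable_num (by norm_num) icW32 (by decide)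
    · exact stable_num (by norm_num) icW33 (by decide)
    · exact stable_num (by norm_num) icW34 (by decide)
    · exact stable_num (by norm_num) icW35 (by decide)
    · exact stable_num (by norm_num) icW36 (by decide)
    · exact stable_num (by norm_num) icW37 (by decide)
    · exact stable_num (by norm_num) icW38 (by decide)
    · exact stable_num (by norm_num) icW39 (by decide)
    · exact stable_num (by norm_num) icW40 (by decide)
    · exact stable_num (by norm_num) icW41 (by decide)
    · exact stable_num (by norm_num) icW42 (by decide)
    · exact stable_num (by norm_num) icW43 (by decide)
    · exact stable_num (by norm_num) icW44 (by decide)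
    · exact stable_num (by norm_num) icW45 (by decide)
    · exact stable_num (by norm_num) icW46 (by decide)
    · exact stable_num (by norm_num) icW47 (by decide)
    · exact stable_num (by norm_num) icW48 (by decide)
    · exact stable_num (by norm_num) icW49 (by decide)
    · exact stable_num (by norm_num) icW50 (by decide)
    · exact stable_num (by norm_num) icW51 (by decide)
    · exact stable_num (by norm_num) icW52 (by decide)
    · exact stable_num (by norm_num) icW53 (by decide)
    · exact stable_num (by norm_num) icW54 (by decide)
    · exact stable_num (by norm_num) icW55 (by decide)
    · exact stable_num (by norm_num) icW56 (by decide)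
    · exact stable_num (by norm_num) icW57 (by decide)
    · exact stable_num (by norm_num) icW58 (by decide)
    · exact stable_num (by norm_num) icW59 (by decide)
    · exact stable_num (by norm_num) icW60 (by decide)
    · exact stable_num (by norm_num) icW61 (by decide)
    · exact stable_num (by norm_num) icW62 (by decide)
    · exact stable_num (by norm_num) icW63 (by decide)
    · exact stable_num (by norm_num) icW64 (by decide)
    · exact stable_num (by norm_num) icW65 (by decide)
    · exact stable_num (by norm_num) icW66 (by decide)
    · exact stable_num (by norm_num) icW67 (by decide)
    · exact stable_num (by norm_num) icW68 (by decide)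
    · exact stable_num (by norm_num) icW69 (by decide)
    · exact stable_num (by norm_num) icW70 (by decide)
    · exact stable_num (by norm_num) icW71 (by decide)
    · exact stable_num (by norm_num) icW72 (by decide)
    · exact stable_num (by norm_num) icW73 (by decide)
    · exact stable_num (by norm_num) icW74 (by decide)
    · exact stable_num (by norm_num) icW75 (by decide)
    · exact stable_num (by norm_num) icW76 (by decide)
    · exact stable_num (by norm_num) icW77 (by decide)
    · exact stable_num (by norm_num) icW78 (by decide)
    · exact stable_num (by norm_num) icW79 (by decide)
    · exact stable_num (by norm_num) icW80 (by decide)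
    · exact stable_num (by norm_num) icW81 (by decide)
    · exact stable_num (by norm_num) icW82 (by decide)
    · exact stable_num (by norm_num) icW83 (by decide)
    · exact stable_num (by norm_num) icW84 (by decide)
    · exact stable_num (by norm_num) icW85 (by decide)
    · exact stable_num (by norm_num) icW86 (by decide)
    · exact stable_num (by norm_num) icW87 (by decide)
    · exact stable_num (by norm_num) icW88 (by decide)
    · exact stable_num (by norm_num) icW89 (by decide)
    · exact stable_num (by norm_num) icW90 (by decide)
    · exact stable_num (by norm_num) icW91 (by decide)
    · exact stable_num (by norm_num) icW92 (by decide)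
    · exact stable_num (by norm_num) icW93 (by decide)
    · exact stable_num (by norm_num) icW94 (by decide)
    · exact stable_num (by norm_num) icW95 (by decide)
    · exact stable_num (by norm_num) icW96 (by decide)
    · exact stable_num (by norm_num) icW97 (by decide)
    · exact stable_num (by norm_num) icW98 (by decide)
    · exact stable_num (by norm_num) icW99 (by decide)
    · exact stable_num (by norm_num) icW100 (by decide)
    · exact stable_num (by norm_num) icW101 (by decide)
    · exact stable_num (by norm_num) icW102 (by decide)
    · exact stable_num (by norm_num) icW103 (by decide)
    · exact stable_num (by norm_num) icW104 (by decide)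
    · exact stable_num (by norm_num) icW105 (by decide)
    · exact stable_num (by norm_num) icW106 (by decide)
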